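/- Let T be a finite index type and R a commutative ring. For each y ∈ T let n(y), and fix natural numbers m_s, m_t, d, p_s, p_t. For each y ∈ T let D_y be an n(y) × d matrix over R (the previous-layer embedding matrix of type-y nodes), let Ā_{y,s} be an m_s × n(y) matrix and Q_{y,s} a d × p_s matrix (the source-type aggregation and transform blocks), and let Ā_{y,t} be an m_t × n(y) matrix and Q_{y,t} a d × p_t matrix (the target-type aggregation and transform blocks). Define the source embedding H_s = Σ_{y ∈ T} Ā_{y,s} · D_y · Q_{y,s} and the target embedding H_t = Σ_{y ∈ T} Ā_{y,t} · D_y · Q_{y,t}. Let Ā_{·t} be the m_t × (Σ_{y} n(y)) matrix given by row-wise concatenation, Ā_{·t}(i, ⟨y,j⟩) = Ā_{y,t}(i,j), and let Q_{·t} be the (Σ_{y ∈ T} d) × p_t matrix given by column-wise stacking, Q_{·t}(⟨y,k⟩, j) = Q_{y,t}(k,j), and similarly define Ā_{·s} and Q_{·s}. Suppose there exists a matrix B with B · Ā_{·t} = 1 (a left inverse of Ā_{·t}) and a matrix C with Q_{·t} · C = 1 (a right inverse of Q_{·t}). Then H_s = (Ā_{·s} · B) · H_t · (C · Q_{·s});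 in particular H_s = A* · H_t · Q* for matrices A* and Q* constructed only from the aggregation matrices and the transform blocks. -/
import Mathlib


/-- Theorem 1 of the paper (precise form): with per-type source/target aggregation and
transform blocks, source embedding `H_s = Σ_y Ā_{y,s} · D_y · Q_{y,s}` and target embedding
`H_t = Σ_y Ā_{y,t} · D_y · Q_{y,t}`, a left inverse `B` of the stacked target adjacency
matrix `Ā_{·t}` and a right inverse `C` of the stacked target transform matrix `Q_{·t}`,
we have `H_s = (Ā_{·s} · B) · H_t · (C · Q_{·s})`; in particular `H_s = A* · H_t · Q*`. -/
theorem hgnn_ktn_theorem1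
    {R : Type*} [CommRing R] {T : Type*} [Fintype T] [DecidableEq T]
    {ms mt d ps pt : ℕ} {n : T → ℕ}
    (D : ∀ y : T, Matrix (Fin (n y)) (Fin d) R)
    (As : ∀ y : T, Matrix (Fin ms) (Fin (n y)) R)
    (Qs : ∀ y : T, Matrix (Fin d) (Fin ps) R)
    (At : ∀ y : T, Matrix (Fin mt) (Fin (n y)) R)
    (Qt : ∀ y : T, Matrix (Fin d) (Fin pt) R)
    (Hs : Matrix (Fin ms) (Fin ps) R) (hHs : Hs = ∑ y : T, As y * D y * Qs y)
    (Ht : Matrix (Fin mt) (Fin pt) R) (hHt : Ht = ∑ y : T, At y * D y * Qt y)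
    (AbarT : Matrix (Fin mt) ((y : T) × Fin (n y)) R)
    (hAbarT : ∀ (i : Fin mt) (y : T) (j : Fin (n y)), AbarT i ⟨y, j⟩ = At y i j)
    (QbarT : Matrix (T × Fin d) (Fin pt) R)
    (hQbarT : ∀ (y : T) (k : Fin d) (j : Fin pt), QbarT (y, k) j = Qt y k j)
    (AbarS : Matrix (Fin ms) ((y : T) × Fin (n y)) R)
    (hAbarS : ∀ (i : Fin ms) (y : T) (j : Fin (n y)), AbarS i ⟨y, j⟩ = As y i j)
    (QbarS : Matrix (T × Fin d) (Fin ps) R)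
    (hQbarS : ∀ (y : T) (k : Fin d) (j : Fin ps), QbarS (y, k) j = Qs y k j)
    (B : Matrix ((y : T) × Fin (n y)) (Fin mt) R) (hB : B * AbarT = 1)
    (C : Matrix (Fin pt) (T × Fin d) R) (hC : QbarT * C = 1) :
    Hs = (AbarS * B) * Ht * (C * QbarS) ∧
      ∃ (Astar : Matrix (Fin ms) (Fin mt) R) (Qstar : Matrix (Fin pt) (Fin ps) R),
        Hs = Astar * Ht * Qstar := by
    classical
  set Dbar : Matrix ((y : T) × Fin (n y)) (T × Fin d) R :=
    fun a b => if h : a.1 = b.1 then D a.1 a.2 (b.2) else 0 with hDbar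
  have key : ∀ {m p : ℕ} (A : ∀ y : T, Matrix (Fin m) (Fin (n y)) R)
      (Q : ∀ y : T, Matrix (Fin d) (Fin p) R)
      (Abar : Matrix (Fin m) ((y : T) × Fin (n y)) R)
      (hA : ∀ (i : Fin m) (y : T) (j : Fin (n y)), Abar i ⟨y, j⟩ = A y i j)
      (Qbar : Matrix (T × Fin d) (Fin p) R)
      (hQ : ∀ (y : T) (k : Fin d) (j : Fin p), Qbar (y, k) j = Q y k j),
      Abar * Dbar * Qbar = ∑ y : T, A y * D y * Q y := by
    intro m p A Q Abar hA Qbar hQ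
    ext i j
    simp only [Matrix.sum_apply, Matrix.mul_apply, Finset.sum_mul, Finset.mul_sum]
    rw [Finset.sum_comm, ← Finset.univ_sigma_univ, Finset.sum_sigma]
    refine Finset.sum_congr rfl fun y _ => ?_
    rw [Finset.sum_comm, Fintype.sum_prod_type]
    rw [Finset.sum_eq_single y]
    · refine Finset.sum_congr rfl fun k _ => Finset.sum_congr rfl fun a _ => ?_
      simp [hDbar, hA, hQ]
    · intro z _ hz
      simp [hDbar, hz.symm]
    · simp
  have hS : Hs = AbarS * Dbar * QbarS := by rw [hHs, key As Qs AbarS hAbarS QbarS hQbarS]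
  have hT : Ht = AbarT * Dbar * QbarT := by rw [hHt, key At Qt AbarT hAbarT QbarT hQbarT]
  have main : Hs = (AbarS * B) * Ht * (C * QbarS) := by
    rw [hT, hS]
    symm
    calc AbarS * B * (AbarT * Dbar * QbarT) * (C * QbarS)
        = AbarS * ((B * AbarT) * (Dbar * ((QbarT * C) * QbarS))) := by
          simp only [Matrix.mul_assoc]
      _ = AbarS * Dbar * QbarS := by rw [hB, hC, Matrix.one_mul, Matrix.one_mul, Matrix.mul_assoc]
  exact ⟨main, AbarS * B, C * QbarS, main⟩
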